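/- If φ is an orthonormal N-frame and η ∈ T_φ, then there exist an orthonormal N-frame u : Fin N → H₀, an orthogonal matrix Q ∈ ℝ^{N×N}, and a diagonal matrix D ∈ ℝ^{N×N} with strictly positive diagonal entries such that φ+η = u·(D^{1/2} Qᵀ) (a singular-value-type decomposition of φ+η). -/

import Mathlib

open scoped RealInnerProductSpace

/-- The outer product `⟦v,w⟧ ∈ ℝ^{N×N}` of two tuples, with entries `⟨v i, w j⟩`. -/
noncomputable def outerProd {N : ℕ} {H₀ : Type*} [NormedAddCommGroup H₀]
    [InnerProductSpace ℝ H₀] (v w : Fin N → H₀) : Matrix (Fin N) (Fin N) ℝ :=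
  Matrix.of fun i j => ⟪v i, w j⟫

/-- Multiplication of a tuple by a matrix from the right: `(vS)_j = Σ_i S_{ij} v_i`. -/
def smulMat {N : ℕ} {H₀ : Type*} [AddCommGroup H₀] [Module ℝ H₀]
    (v : Fin N → H₀) (S : Matrix (Fin N) (Fin N) ℝ) : Fin N → H₀ :=
  fun j => ∑ i, S i j • v i

/-- The inner product `(v,w)_H = Σ_j ⟨v_j, w_j⟩ = tr⟦v,w⟧`. -/
noncomputable def innerH {N : ℕ} {H₀ : Type*} [NormedAddCommGroup H₀]
    [InnerProductSpace ℝ H₀] (v w : Fin N → H₀) : ℝ :=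
  ∑ j, ⟪v j, w j⟫

section Aux

variable {N : ℕ} {H₀ : Type*} [NormedAddCommGroup H₀] [InnerProductSpace ℝ H₀]

lemma outerProd_smulMat (v : Fin N → H₀) (S T : Matrix (Fin N) (Fin N) ℝ) :
    outerProd (smulMat v S) (smulMat v T) = S.transpose * outerProd v v * T := by
  ext j k
  simp only [outerProd, smulMat, Matrix.of_apply, Matrix.mul_apply, Matrix.transpose_apply]
  rw [sum_inner]
  simp only [inner_sum, real_inner_smul_left, real_inner_smul_right, Finset.sum_mul,
    Finset.mul_sum]
  rw [Finset.sum_comm]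
  exact Finset.sum_congr rfl fun i _ => Finset.sum_congr rfl fun l _ => by ring

lemma smulMat_smulMat (v : Fin N → H₀) (S T : Matrix (Fin N) (Fin N) ℝ) :
    smulMat (smulMat v S) T = smulMat v (S * T) := by
  funext k
  simp only [smulMat, Matrix.mul_apply, Finset.smul_sum, Finset.sum_smul, smul_smul]
  rw [Finset.sum_comm]
  refine Finset.sum_congr rfl fun i _ => Finset.sum_congr rfl fun j _ => ?_
  ring_nf

lemma smulMat_one (v : Fin N → H₀) : smulMat v 1 = v := by
  funext j
  simp [smulMat, Matrix.one_apply]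

lemma outerProd_posSemidef (v : Fin N → H₀) : (outerProd v v).PosSemidef := by
  rw [Matrix.posSemidef_iff_dotProduct_mulVec]
  constructor
  · ext i j
    simp [outerProd, Matrix.IsHermitian, real_inner_comm, Matrix.conjTranspose_apply]
  · intro x
    have : dotProduct (star x) ((outerProd v v).mulVec x)
        = (inner ℝ (∑ i, x i • v i) (∑ j, x j • v j) : ℝ) := by
      simp only [dotProduct, Matrix.mulVec, Pi.star_apply, star_trivial, outerProd,
        Matrix.of_apply, sum_inner, inner_sum, real_inner_smul_left, real_inner_smul_right,
        Finset.mul_sum]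
      refine Finset.sum_congr rfl fun i _ => Finset.sum_congr rfl fun j _ => by
        rw [real_inner_comm (v j) (v i)]; ring
    rw [this]
    exact real_inner_self_nonneg

end Aux

/-- singular-value-type decomposition `φ + η = u · (D^{1/2} Qᵀ)` with `u`
an orthonormal frame, `Q` orthogonal and `D` diagonal with strictly positive diagonal
entries; `D^{1/2}` is the entrywise square root of `D`. -/
theorem svd_type_decomposition {N : ℕ} (hN : 1 ≤ N) {H₀ : Type*}
    [NormedAddCommGroup H₀] [InnerProductSpace ℝ H₀]
    (φ η : Fin N → H₀) (hφ : outerProd φ φ = 1)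
    (hη : outerProd η φ + outerProd φ η = 0) :
    ∃ (u : Fin N → H₀) (Q D : Matrix (Fin N) (Fin N) ℝ),
      outerProd u u = 1 ∧
      Q.transpose * Q = 1 ∧
      D.IsDiag ∧ (∀ i, 0 < D i i) ∧
      φ + η = smulMat u ((Matrix.of fun i j => Real.sqrt (D i j)) * Q.transpose) := by
  set v := φ + η with hv
  have hG : outerProd v v = 1 + outerProd η η := by
    have expand : outerProd v v
        = outerProd φ φ + (outerProd η φ + outerProd φ η) + outerProd η η := by
      ext i j
      simp only [outerProd, Matrix.of_apply, hv, Matrix.add_apply, Pi.add_apply]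
      rw [inner_add_left, inner_add_right, inner_add_right]
      ring
    rw [expand, hφ, hη, add_zero]
  have hGpd : (outerProd v v).PosDef := by
    rw [hG]
    exact Matrix.PosDef.add_posSemidef Matrix.PosDef.one (outerProd_posSemidef η)
  have hGherm : (outerProd v v).IsHermitian := hGpd.isHermitian
  set Q : Matrix (Fin N) (Fin N) ℝ := (hGherm.eigenvectorUnitary : Matrix (Fin N) (Fin N) ℝ)
    with hQdef
  set d : Fin N → ℝ := hGherm.eigenvalues with hd
  have hdpos : ∀ i, 0 < d i := fun i => hGpd.eigenvalues_pos i
  set D : Matrix (Fin N) (Fin N) ℝ := Matrix.diagonal d with hD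
  have hQstar : star Q = Q.transpose := by
    ext i j
    simp [Matrix.star_eq_conjTranspose, Matrix.conjTranspose_apply]
  have hspec : outerProd v v = Q * D * Q.transpose := by
    have := hGherm.spectral_theorem
    rw [Unitary.conjStarAlgAut_apply] at this
    rw [hQstar] at this
    simpa [hD, RCLike.ofReal_real_eq_id, Function.comp] using this
  have hQQt : Q * Q.transpose = 1 := by
    rw [← hQstar]; exact Matrix.mem_unitaryGroup_iff.mp hGherm.eigenvectorUnitary.2
  have hQtQ : Q.transpose * Q = 1 := by
    rw [← hQstar]; exact Matrix.mem_unitaryGroup_iff'.mp hGherm.eigenvectorUnitary.2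
  -- square roots
  set s : Fin N → ℝ := fun i => Real.sqrt (d i) with hs
  have hspos : ∀ i, 0 < s i := fun i => Real.sqrt_pos.mpr (hdpos i)
  have hssq : ∀ i, s i * s i = d i := fun i => Real.mul_self_sqrt (hdpos i).le
  set u : Fin N → H₀ := smulMat v (Q * Matrix.diagonal (fun i => (s i)⁻¹)) with hu
  refine ⟨u, Q, D, ?_, hQtQ, Matrix.isDiag_diagonal d, fun i => by
    simpa [hD, Matrix.diagonal_apply_eq] using hdpos i, ?_⟩
  · -- ⟦u,u⟧ = 1
    rw [hu, outerProd_smulMat, hspec]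
    rw [Matrix.transpose_mul, Matrix.diagonal_transpose]
    have key : Matrix.diagonal (fun i => (s i)⁻¹) * Q.transpose * (Q * D * Q.transpose)
        * (Q * Matrix.diagonal fun i => (s i)⁻¹) = 1 := by
      calc Matrix.diagonal (fun i => (s i)⁻¹) * Q.transpose * (Q * D * Q.transpose)
            * (Q * Matrix.diagonal fun i => (s i)⁻¹)
          = Matrix.diagonal (fun i => (s i)⁻¹) * (Q.transpose * Q) * D
            * (Q.transpose * Q) * Matrix.diagonal (fun i => (s i)⁻¹) := by
            noncomm_ring
        _ = Matrix.diagonal (fun i => (s i)⁻¹) * D * Matrix.diagonal (fun i => (s i)⁻¹) := by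
            rw [hQtQ]; noncomm_ring
        _ = 1 := by
            rw [hD, Matrix.diagonal_mul_diagonal, Matrix.diagonal_mul_diagonal]
            have : (fun i => (s i)⁻¹ * d i * (s i)⁻¹) = fun _ => (1:ℝ) := by
              funext i
              have h0 := (hspos i).ne'
              rw [← hssq i]
              field_simp
            rw [this, Matrix.diagonal_one]
    rw [← key]
  · -- v = u (D^{1/2} Qᵀ)
    have hsqrtD : (Matrix.of fun i j => Real.sqrt (D i j)) = Matrix.diagonal s := by
      ext i j
      by_cases h : i = j
      · subst h; simp [hD, hs, Matrix.diagonal_apply_eq]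
      · simp [hD, hs, Matrix.diagonal_apply_ne _ h, Real.sqrt_zero, h]
    rw [hsqrtD, hu, smulMat_smulMat]
    have : Q * Matrix.diagonal (fun i => (s i)⁻¹) * (Matrix.diagonal s * Q.transpose) = 1 := by
      calc Q * Matrix.diagonal (fun i => (s i)⁻¹) * (Matrix.diagonal s * Q.transpose)
          = Q * (Matrix.diagonal (fun i => (s i)⁻¹) * Matrix.diagonal s) * Q.transpose := by
            noncomm_ring
        _ = Q * Q.transpose := by
            rw [Matrix.diagonal_mul_diagonal]
            have : (fun i => (s i)⁻¹ * s i) = fun _ => (1:ℝ) := by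
              funext i; exact inv_mul_cancel₀ (hspos i).ne'
            rw [this, Matrix.diagonal_one, mul_one]
        _ = 1 := hQQt
    rw [this, smulMat_one]
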